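/- Let A_1, A_2 be real symmetric n×n matrices and let X be a nonzero positive semidefinite real symmetric n×n matrix with (tr(A_1 X), tr(A_2 X)) ≠ (0,0). Then there exists a nonzero vector x in the range of X such that x^T A_1 x = tr(A_1 X) and x^T A_2 x = tr(A_2 X). -/

import Mathlib

open Matrix

lemma sqsum_pos {x y : ℝ} (h : ¬(x = 0 ∧ y = 0)) : 0 < x ^ 2 + y ^ 2 := by
  rcases not_and_or.mp h with h | h
  · nlinarith [sq_nonneg y, sq_abs x, abs_pos.mpr h]
  · nlinarith [sq_nonneg x, sq_abs y, abs_pos.mpr h]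

lemma halfangle (α β ρ : ℝ) (h : α ^ 2 + β ^ 2 = ρ ^ 2) (hρ : 0 ≤ ρ) :
    ∃ p q : ℝ, p ^ 2 = (ρ + α) / 2 ∧ q ^ 2 = (ρ - α) / 2 ∧ 2 * p * q = β := by
  rcases lt_or_ge 0 (ρ + α) with hpa | hpa
  · set s := Real.sqrt ((ρ + α) / 2) with hs
    have hs2 : s ^ 2 = (ρ + α) / 2 := Real.sq_sqrt (by linarith)
    have hs0 : 0 < s := Real.sqrt_pos.mpr (by linarith)
    refine ⟨s, β / (2 * s), hs2, ?_, ?_⟩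
    · have hβ : β ^ 2 = (ρ - α) * (ρ + α) := by nlinarith
      field_simp
      nlinarith [hs2, hβ, hs0]
    · field_simp
  · have hαρ : α = -ρ := by nlinarith [sq_nonneg β, sq_nonneg (α + ρ), sq_nonneg (α - ρ)]
    have hβ : β = 0 := by nlinarith
    refine ⟨0, Real.sqrt ρ, by simp [hαρ], ?_, by simp [hβ]⟩
    rw [Real.sq_sqrt hρ]; rw [hαρ]; ring

lemma solve_cone (a₁ b₁ c₁ a₂ b₂ c₂ : ℝ) (hd : ¬(a₁ + b₁ = 0 ∧ a₂ + b₂ = 0)) :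
    ∃ α β ρ : ℝ, α ^ 2 + β ^ 2 = ρ ^ 2 ∧ 0 ≤ ρ ∧
      (ρ - 2) * (a₁ + b₁) + α * (a₁ - b₁) + 2 * β * c₁ = 0 ∧
      (ρ - 2) * (a₂ + b₂) + α * (a₂ - b₂) + 2 * β * c₂ = 0 := by
  by_cases hD : (a₁ - b₁) * (2 * c₂) - (2 * c₁) * (a₂ - b₂) = 0
  · by_cases h1 : a₁ - b₁ = 0 ∧ c₁ = 0
    · by_cases h2 : a₂ - b₂ = 0 ∧ c₂ = 0
      · exact ⟨2, 0, 2, by norm_num, by norm_num,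
          by rw [h1.1, h1.2]; ring, by rw [h2.1, h2.2]; ring⟩
      · have hN : (0:ℝ) < (a₂ - b₂) ^ 2 + (2 * c₂) ^ 2 := by
          have := sqsum_pos h2; nlinarith
        have hN0 : 0 < Real.sqrt ((a₂ - b₂) ^ 2 + (2 * c₂) ^ 2) := Real.sqrt_pos.mpr hN
        have hN2 : Real.sqrt ((a₂ - b₂) ^ 2 + (2 * c₂) ^ 2) ^ 2
            = (a₂ - b₂) ^ 2 + (2 * c₂) ^ 2 := Real.sq_sqrt hN.le
        set N := Real.sqrt ((a₂ - b₂) ^ 2 + (2 * c₂) ^ 2)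
        refine ⟨-2 * (2 * c₂) / N, 2 * (a₂ - b₂) / N, 2, ?_, by norm_num, ?_, ?_⟩
        · field_simp
          linear_combination (-1 : ℝ) * hN2
        · rw [h1.1, h1.2]; field_simp; ring
        · field_simp; ring
    · have hN : (0:ℝ) < (a₁ - b₁) ^ 2 + (2 * c₁) ^ 2 := by
        have := sqsum_pos h1; nlinarith
      have hN0 : 0 < Real.sqrt ((a₁ - b₁) ^ 2 + (2 * c₁) ^ 2) := Real.sqrt_pos.mpr hN
      have hN2 : Real.sqrt ((a₁ - b₁) ^ 2 + (2 * c₁) ^ 2) ^ 2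
          = (a₁ - b₁) ^ 2 + (2 * c₁) ^ 2 := Real.sq_sqrt hN.le
      set N := Real.sqrt ((a₁ - b₁) ^ 2 + (2 * c₁) ^ 2)
      refine ⟨-2 * (2 * c₁) / N, 2 * (a₁ - b₁) / N, 2, ?_, by norm_num, ?_, ?_⟩
      · field_simp
        linear_combination (-1 : ℝ) * hN2
      · field_simp; ring
      · field_simp
        linear_combination (2 : ℝ) * hD
  · obtain ⟨g₁, g₂, hW1, hW2⟩ : ∃ g₁ g₂ : ℝ,
        (a₁ - b₁) * g₁ + 2 * c₁ * g₂ = a₁ + b₁ ∧ (a₂ - b₂) * g₁ + 2 * c₂ * g₂ = a₂ + b₂ := by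
      refine ⟨(2 * c₂ * (a₁ + b₁) - 2 * c₁ * (a₂ + b₂)) /
          ((a₁ - b₁) * (2 * c₂) - (2 * c₁) * (a₂ - b₂)),
        ((a₁ - b₁) * (a₂ + b₂) - (a₂ - b₂) * (a₁ + b₁)) /
          ((a₁ - b₁) * (2 * c₂) - (2 * c₁) * (a₂ - b₂)), ?_, ?_⟩ <;>
        · rw [mul_div_assoc', mul_div_assoc', ← add_div, div_eq_iff hD]
          ring
    have hG : 0 < g₁ ^ 2 + g₂ ^ 2 := by
      apply sqsum_pos
      rintro ⟨h1, h2⟩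
      apply hd
      constructor
      · rw [← hW1, h1, h2]; ring
      · rw [← hW2, h1, h2]; ring
    have hk0 : 0 < Real.sqrt (g₁ ^ 2 + g₂ ^ 2) := Real.sqrt_pos.mpr hG
    have hk2 : Real.sqrt (g₁ ^ 2 + g₂ ^ 2) ^ 2 = g₁ ^ 2 + g₂ ^ 2 := Real.sq_sqrt hG.le
    set k := Real.sqrt (g₁ ^ 2 + g₂ ^ 2)
    have hk1 : (0:ℝ) < k + 1 := by linarith
    refine ⟨(2 / (k + 1)) * g₁, (2 / (k + 1)) * g₂, 2 * k / (k + 1), ?_, by positivity, ?_, ?_⟩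
    · field_simp
      linear_combination (-1 : ℝ) * hk2
    · field_simp
      linear_combination (2 : ℝ) * hW1
    · field_simp
      linear_combination (2 : ℝ) * hW2

lemma key (a₁ b₁ c₁ a₂ b₂ c₂ : ℝ) :
    ∃ p q : ℝ, p ^ 2 * a₁ + 2 * p * q * c₁ + q ^ 2 * b₁ = a₁ + b₁ ∧
      p ^ 2 * a₂ + 2 * p * q * c₂ + q ^ 2 * b₂ = a₂ + b₂ := by
  by_cases hd : a₁ + b₁ = 0 ∧ a₂ + b₂ = 0
  · refine ⟨0, 0, ?_, ?_⟩
    · rw [hd.1]; ring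
    · rw [hd.2]; ring
  · obtain ⟨α, β, ρ, h, hρ, h1, h2⟩ := solve_cone a₁ b₁ c₁ a₂ b₂ c₂ hd
    obtain ⟨p, q, hp, hq, hpq⟩ := halfangle α β ρ h hρ
    refine ⟨p, q, ?_, ?_⟩
    · linear_combination a₁ * hp + c₁ * hpq + b₁ * hq + (1 / 2) * h1
    · linear_combination a₂ * hp + c₂ * hpq + b₂ * hq + (1 / 2) * h2

lemma quad_expand {n : ℕ} (M : Matrix (Fin n) (Fin n) ℝ) (hM : M.IsSymm)
    (u v : Fin n → ℝ) (p q : ℝ) :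
    (p • u + q • v) ⬝ᵥ M.mulVec (p • u + q • v) =
      p ^ 2 * (u ⬝ᵥ M.mulVec u) + 2 * p * q * (u ⬝ᵥ M.mulVec v) + q ^ 2 * (v ⬝ᵥ M.mulVec v) := by
  have hsym : v ⬝ᵥ M.mulVec u = u ⬝ᵥ M.mulVec v := by
    rw [dotProduct_mulVec]
    nth_rewrite 1 [← hM.eq]
    rw [vecMul_transpose, dotProduct_comm]
  simp only [mulVec_add, mulVec_smul, dotProduct_add, add_dotProduct, smul_dotProduct,
    dotProduct_smul, smul_eq_mul]
  linear_combination (q * p) * hsym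

/-- Additive-representation lemma (Dines): any finite sum of joint values of two symmetric
quadratic forms is itself a joint value. -/
lemma rep {n : ℕ} (M₁ M₂ : Matrix (Fin n) (Fin n) ℝ) (h₁ : M₁.IsSymm) (h₂ : M₂.IsSymm)
    {ι : Type} [DecidableEq ι] (s : Finset ι) (f : ι → Fin n → ℝ) :
    ∃ t : Fin n → ℝ, t ⬝ᵥ M₁.mulVec t = ∑ i ∈ s, (f i) ⬝ᵥ M₁.mulVec (f i) ∧
      t ⬝ᵥ M₂.mulVec t = ∑ i ∈ s, (f i) ⬝ᵥ M₂.mulVec (f i) := by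
  induction s using Finset.induction with
  | empty => exact ⟨0, by simp, by simp⟩
  | @insert a s ha ih =>
    obtain ⟨t, ht₁, ht₂⟩ := ih
    obtain ⟨p, q, hk₁, hk₂⟩ := key (f a ⬝ᵥ M₁.mulVec (f a)) (t ⬝ᵥ M₁.mulVec t)
      (f a ⬝ᵥ M₁.mulVec t) (f a ⬝ᵥ M₂.mulVec (f a)) (t ⬝ᵥ M₂.mulVec t) (f a ⬝ᵥ M₂.mulVec t)
    refine ⟨p • f a + q • t, ?_, ?_⟩
    · rw [quad_expand M₁ h₁, Finset.sum_insert ha, ← ht₁]; exact hk₁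
    · rw [quad_expand M₂ h₂, Finset.sum_insert ha, ← ht₂]; exact hk₂

lemma trace_as_sum {n : ℕ} (M : Matrix (Fin n) (Fin n) ℝ) :
    M.trace = ∑ i : Fin n, (Pi.single i 1) ⬝ᵥ M.mulVec (Pi.single i 1) := by
  simp [Matrix.trace, Matrix.diag, mulVec_single, single_dotProduct]

theorem stmt_2 (n : ℕ) (A₁ A₂ X : Matrix (Fin n) (Fin n) ℝ)
    (hA₁ : A₁.IsSymm) (hA₂ : A₂.IsSymm)
    (hX : X.PosSemidef) (hX0 : X ≠ 0)
    (hne : ((A₁ * X).trace, (A₂ * X).trace) ≠ (0, 0)) :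
    ∃ x : Fin n → ℝ, x ≠ 0 ∧ (∃ y, X.mulVec y = x) ∧
      x ⬝ᵥ A₁.mulVec x = (A₁ * X).trace ∧
      x ⬝ᵥ A₂.mulVec x = (A₂ * X).trace := by
  classical
  obtain ⟨S, hSS, hSsym⟩ : ∃ S : Matrix (Fin n) (Fin n) ℝ, S * S = X ∧ Sᵀ = S := by
    open scoped MatrixOrder in
    exact ⟨CFC.sqrt X, CFC.sqrt_mul_sqrt_self X hX.nonneg, by
      have := (CFC.sqrt_nonneg X).posSemidef.1
      rwa [Matrix.IsHermitian, conjTranspose_eq_transpose_of_trivial] at this⟩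
  have hMsym : ∀ A : Matrix (Fin n) (Fin n) ℝ, A.IsSymm → (S * A * S).IsSymm := by
    intro A hA
    rw [Matrix.IsSymm, transpose_mul, transpose_mul, hSsym, hA.eq, ← mul_assoc]
  have htr : ∀ A : Matrix (Fin n) (Fin n) ℝ, (A * X).trace = (S * A * S).trace := by
    intro A
    rw [← hSS, ← mul_assoc, trace_mul_cycle]
  have hquad : ∀ (A : Matrix (Fin n) (Fin n) ℝ) (t : Fin n → ℝ),
      t ⬝ᵥ (S * A * S).mulVec t = (S.mulVec t) ⬝ᵥ A.mulVec (S.mulVec t) := by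
    intro A t
    rw [mul_assoc, ← mulVec_mulVec, dotProduct_mulVec]
    nth_rewrite 1 [← hSsym]
    rw [vecMul_transpose, mulVec_mulVec]
  obtain ⟨t, ht₁, ht₂⟩ := rep (S * A₁ * S) (S * A₂ * S) (hMsym A₁ hA₁) (hMsym A₂ hA₂)
    Finset.univ (fun i => Pi.single i 1)
  rw [← trace_as_sum] at ht₁ ht₂
  set x := S.mulVec t with hxdef
  have hx₁ : x ⬝ᵥ A₁.mulVec x = (A₁ * X).trace := by
    rw [htr A₁, ← hquad A₁ t, ht₁]
  have hx₂ : x ⬝ᵥ A₂.mulVec x = (A₂ * X).trace := by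
    rw [htr A₂, ← hquad A₂ t, ht₂]
  have hx0 : x ≠ 0 := by
    intro h
    apply hne
    rw [← hx₁, ← hx₂, h]
    simp
  refine ⟨x, hx0, ?_, hx₁, hx₂⟩
  have hker : LinearMap.ker (S * S).mulVecLin = LinearMap.ker S.mulVecLin := by
    have := Matrix.ker_mulVecLin_transpose_mul_self S
    rwa [hSsym] at this
  have hle : LinearMap.range (S * S).mulVecLin ≤ LinearMap.range S.mulVecLin := by
    rw [mulVecLin_mul]
    exact LinearMap.range_comp_le_range _ _
  have hfr : Module.finrank ℝ (LinearMap.range S.mulVecLin) ≤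
      Module.finrank ℝ (LinearMap.range (S * S).mulVecLin) := by
    have e1 := LinearMap.finrank_range_add_finrank_ker (S * S).mulVecLin
    have e2 := LinearMap.finrank_range_add_finrank_ker S.mulVecLin
    rw [hker] at e1
    omega
  have hrange := Submodule.eq_of_le_of_finrank_le hle hfr
  have hxmem : x ∈ LinearMap.range S.mulVecLin := ⟨t, rfl⟩
  rw [← hrange] at hxmem
  obtain ⟨y, hy⟩ := hxmem
  refine ⟨y, ?_⟩
  rw [← hSS]
  exact hy
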